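/- Let G be a group with identity e and let (s₁,…,s_M) be a finite sequence of elements of G∖{e} generating G. Then for every function f:G→ℝ and every x∈G, Γ₂f(x) = (1/4)·∑_{i=1}^{M}∑_{j=1}^{M} (∂_i∂_j f(x))² + (1/2)·∑_{i=1}^{M}∑_{j=1}^{M} ∂_j f(x)·(∂_i∂_j f(x) − ∂_j∂_i f(x)). -/
import Mathlib


noncomputable section CayleyOps

variable {G : Type*} [Group G] {M : ℕ}

/-- `∂_i f (x) = f (x * sᵢ) - f x`. -/
def dOp (s : Fin M → G) (i : Fin M) (f : G → ℝ) (x : G) : ℝ := f (x * s i) - f x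

/-- `Δ f (x) = ∑_{i=1}^{M} ∂_i f (x)`. -/
def lapC (s : Fin M → G) (f : G → ℝ) (x : G) : ℝ := ∑ i, dOp s i f x

/-- `Γ f (x) = (1/2) ∑_{i=1}^{M} (∂_i f (x))²`. -/
def gammaC (s : Fin M → G) (f : G → ℝ) (x : G) : ℝ := (1 / 2) * ∑ i, (dOp s i f x) ^ 2

/-- `Γ(f,g)(x) = (1/2) ∑_{i=1}^{M} ∂_i f (x) ∂_i g (x)`. -/
def gammaBilC (s : Fin M → G) (f g : G → ℝ) (x : G) : ℝ :=
  (1 / 2) * ∑ i, dOp s i f x * dOp s i g x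

/-- `Γ₂ f = (1/2) Δ (Γ f) - Γ(f, Δ f)`. -/
def gamma2C (s : Fin M → G) (f : G → ℝ) (x : G) : ℝ :=
  (1 / 2) * lapC s (gammaC s f) x - gammaBilC s f (lapC s f) x

end CayleyOps

/-- **Bochner formula on Cayley graphs.** For a group `G` generated by
a finite sequence `s₁, …, s_M` of elements of `G ∖ {e}`,
`Γ₂ f(x) = (1/4) ∑ᵢ∑ⱼ (∂ᵢ∂ⱼf(x))² + (1/2) ∑ᵢ∑ⱼ ∂ⱼf(x) (∂ᵢ∂ⱼf(x) - ∂ⱼ∂ᵢf(x))`. -/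
theorem bochner_cayley {G : Type*} [Group G] {M : ℕ} (s : Fin M → G)
    (hs : ∀ i, s i ≠ 1) (hgen : Subgroup.closure (Set.range s) = ⊤)
    (f : G → ℝ) (x : G) :
    gamma2C s f x =
      (1 / 4) * (∑ i, ∑ j, (dOp s i (dOp s j f) x) ^ 2) +
      (1 / 2) * ∑ i, ∑ j, dOp s j f x * (dOp s i (dOp s j f) x - dOp s j (dOp s i f) x) := by
  have h1 : (1 : ℝ) / 2 * lapC s (gammaC s f) x
      = ∑ i, ∑ j, (1 / 4) * ((dOp s j f (x * s i)) ^ 2 - (dOp s j f x) ^ 2) := by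
    unfold lapC gammaC dOp
    rw [Finset.mul_sum]
    refine Finset.sum_congr rfl fun i _ => ?_
    dsimp only
    rw [Finset.mul_sum, Finset.mul_sum, mul_sub, Finset.mul_sum, Finset.mul_sum,
      ← Finset.sum_sub_distrib]
    exact Finset.sum_congr rfl fun j _ => by ring
  have h2 : gammaBilC s f (lapC s f) x
      = ∑ i, ∑ j, (1 / 2) * (dOp s j f x * (dOp s i f (x * s j) - dOp s i f x)) := by
    unfold gammaBilC lapC
    rw [Finset.sum_comm, Finset.mul_sum]
    refine Finset.sum_congr rfl fun j _ => ?_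
    simp only [dOp]
    rw [← Finset.sum_sub_distrib, Finset.mul_sum, Finset.mul_sum]
  rw [gamma2C, h1, h2, ← Finset.sum_sub_distrib, Finset.mul_sum, Finset.mul_sum,
    ← Finset.sum_add_distrib]
  refine Finset.sum_congr rfl fun i _ => ?_
  rw [← Finset.sum_sub_distrib, Finset.mul_sum, Finset.mul_sum, ← Finset.sum_add_distrib]
  refine Finset.sum_congr rfl fun j _ => ?_
  simp only [dOp, mul_assoc]
  ring
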